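/- Let 1 ≤ i' ≤ i ≤ n. If maxlow(i) < i', then γ^0_{[1,2]}(i',i) = min{ γ^1_{[1,2]}(low(j+1,i), j : j), γ^1_{[1,2]}(low(j+1,i), j : j,k) : j ∈ [maxlow(i), i'), k ∈ [low(j+1,i), j) }; if maxlow(i) ≥ i', then γ^0_{[1,2]}(i',i) = ∞ (i.e., is not defined). -/
import Mathlib


/-- `G` is a graph with vertex set `{1,…,n}` (all edges lie inside `{1,…,n}`),
whose adjacency satisfies the interval-graph numbering property: whenever
`i < j < k` and `i` is adjacent to `k`, then `j` is adjacent to `k`. -/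
def GoodNumbering (G : SimpleGraph ℕ) (n : ℕ) : Prop :=
  (∀ u v : ℕ, G.Adj u v → u ∈ Finset.Icc 1 n ∧ v ∈ Finset.Icc 1 n) ∧
  (∀ i j k : ℕ, i < j → j < k → G.Adj i k → G.Adj j k)

/-- `low a = min N[a]`, the minimum of the closed neighborhood of `a`. -/
noncomputable def low (G : SimpleGraph ℕ) (a : ℕ) : ℕ :=
  sInf {b : ℕ | b = a ∨ G.Adj a b}

/-- `lowI a b = min {low k : k ∈ [a,b]}`. -/
noncomputable def lowI (G : SimpleGraph ℕ) (a b : ℕ) : ℕ :=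
  sInf (low G '' Set.Icc a b)

/-- `maxlow a = max {low k : low a ≤ k ≤ a}`. -/
noncomputable def maxlow (G : SimpleGraph ℕ) (a : ℕ) : ℕ :=
  sSup (low G '' Set.Icc (low G a) a)

/-- `D` is a `[1,2]`-dominating set of the induced subgraph `G[1,i]`:
`D ⊆ [1,i]` and every vertex of `[1,i]` outside `D` has at least one and at
most two neighbors in `D`. -/
def Dom12 (G : SimpleGraph ℕ) (i : ℕ) (D : Finset ℕ) : Prop :=
  D ⊆ Finset.Icc 1 i ∧
  ∀ v ∈ Finset.Icc 1 i, v ∉ D →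
    1 ≤ {u ∈ (D : Set ℕ) | G.Adj v u}.ncard ∧ {u ∈ (D : Set ℕ) | G.Adj v u}.ncard ≤ 2

/-- The minimum (in `ℕ∞`, with `sInf ∅ = ⊤`) of the cardinalities of the
`[1,2]`-dominating sets `D` of `G[1,i]` satisfying the extra property `P`. -/
noncomputable def gval (G : SimpleGraph ℕ) (i : ℕ) (P : Finset ℕ → Prop) : ℕ∞ :=
  sInf {k : ℕ∞ | ∃ D : Finset ℕ, Dom12 G i D ∧ P D ∧ (D.card : ℕ∞) = k}

/-- `γ_{[1,2]}(i)`. -/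
noncomputable def g12 (G : SimpleGraph ℕ) (i : ℕ) : ℕ∞ :=
  gval G i fun _ => True

/-- `γ⁰_{[1,2]}(j,i)`: no vertex of `[j,i]` is in `D`. -/
noncomputable def g0I (G : SimpleGraph ℕ) (j i : ℕ) : ℕ∞ :=
  gval G i fun D => ∀ x ∈ Finset.Icc j i, x ∉ D

/-- `γ⁰_{[1,2]}(j,i:k)`: `k ∈ D` and no other vertex of `[j,i]` is in `D`. -/
noncomputable def g0Ik (G : SimpleGraph ℕ) (j i k : ℕ) : ℕ∞ :=
  gval G i fun D => k ∈ D ∧ ∀ x ∈ Finset.Icc j i, x ≠ k → x ∉ D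

/-- `γ¹_{[1,2]}(i)`: `i ∈ D`. -/
noncomputable def g1 (G : SimpleGraph ℕ) (i : ℕ) : ℕ∞ :=
  gval G i fun D => i ∈ D

/-- `γ¹_{[1,2]}(j,i:i)`: `i ∈ D` and no vertex of `[j,i)` is in `D`. -/
noncomputable def g1I (G : SimpleGraph ℕ) (j i : ℕ) : ℕ∞ :=
  gval G i fun D => i ∈ D ∧ ∀ x ∈ Finset.Ico j i, x ∉ D

/-- `γ¹_{[1,2]}(k,i:i,j)`: `i, j ∈ D` and no other vertex of `[k,i)` is in `D`. -/
noncomputable def g1Ij (G : SimpleGraph ℕ) (k i j : ℕ) : ℕ∞ :=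
  gval G i fun D => i ∈ D ∧ j ∈ D ∧ ∀ x ∈ Finset.Ico k i, x ≠ j → x ∉ D

/-- `γ¹_{[1,2]}(l,i:i,j,k)`: `i, j, k ∈ D` and no other vertex of `[l,i)` is in `D`. -/
noncomputable def g1Ijk (G : SimpleGraph ℕ) (l i j k : ℕ) : ℕ∞ :=
  gval G i fun D => i ∈ D ∧ j ∈ D ∧ k ∈ D ∧ ∀ x ∈ Finset.Ico l i, x ≠ j → x ≠ k → x ∉ D

/-- `γ¹¹_{[1,2]}(l,i:i,j,k)`: `i, j ∈ D`, all of `[l,k] ⊆ D`, and no vertex of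
`(k,i)` other than `j` is in `D`. -/
noncomputable def g11Ijk (G : SimpleGraph ℕ) (l i j k : ℕ) : ℕ∞ :=
  gval G i fun D => i ∈ D ∧ j ∈ D ∧ (∀ x ∈ Finset.Icc l k, x ∈ D) ∧
    ∀ x ∈ Finset.Ioo k i, x ≠ j → x ∉ D

-- helpers

lemma low_le_self (G : SimpleGraph ℕ) (a : ℕ) : low G a ≤ a :=
  Nat.sInf_le (Or.inl rfl)

lemma low_le_of_adj (G : SimpleGraph ℕ) {a b : ℕ} (h : G.Adj a b) : low G a ≤ b :=
  Nat.sInf_le (Or.inr h)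

lemma low_mem (G : SimpleGraph ℕ) (a : ℕ) : low G a = a ∨ G.Adj a (low G a) :=
  Nat.sInf_mem (⟨a, Or.inl rfl⟩ : Set.Nonempty {b : ℕ | b = a ∨ G.Adj a b})

lemma low_pos {G : SimpleGraph ℕ} {n : ℕ} (hG : GoodNumbering G n) {a : ℕ} (ha : 1 ≤ a) :
    1 ≤ low G a := by
  rcases low_mem G a with h | h
  · omega
  · have := (hG.1 a (low G a) h).2
    simp only [Finset.mem_Icc] at this
    exact this.1

lemma adj_of_low_le {G : SimpleGraph ℕ} {n : ℕ} (hG : GoodNumbering G n) {u v : ℕ}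
    (h1 : low G v ≤ u) (h2 : u < v) : G.Adj v u := by
  have hne : low G v ≠ v := by omega
  have hadj : G.Adj v (low G v) := (low_mem G v).resolve_left hne
  rcases eq_or_lt_of_le h1 with h | h
  · exact h ▸ hadj
  · exact (hG.2 (low G v) u v h h2 hadj.symm).symm

lemma maxlow_spec (G : SimpleGraph ℕ) (i : ℕ) :
    ∃ k, low G i ≤ k ∧ k ≤ i ∧ low G k = maxlow G i := by
  have hne : (low G '' Set.Icc (low G i) i).Nonempty :=
    ⟨low G i, i, Set.mem_Icc.2 ⟨low_le_self G i, le_refl i⟩, rfl⟩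
  have hbdd : BddAbove (low G '' Set.Icc (low G i) i) := by
    refine ⟨i, ?_⟩
    rintro x ⟨k, hk, rfl⟩
    exact le_trans (low_le_self G k) (Set.mem_Icc.1 hk).2
  obtain ⟨k, hk, hke⟩ := Nat.sSup_mem hne hbdd
  exact ⟨k, (Set.mem_Icc.1 hk).1, (Set.mem_Icc.1 hk).2, hke⟩

lemma le_maxlow (G : SimpleGraph ℕ) {i k : ℕ} (h1 : low G i ≤ k) (h2 : k ≤ i) :
    low G k ≤ maxlow G i := by
  have hbdd : BddAbove (low G '' Set.Icc (low G i) i) := by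
    refine ⟨i, ?_⟩
    rintro x ⟨m, hm, rfl⟩
    exact le_trans (low_le_self G m) (Set.mem_Icc.1 hm).2
  exact le_csSup hbdd ⟨k, Set.mem_Icc.2 ⟨h1, h2⟩, rfl⟩

lemma low_le_maxlow (G : SimpleGraph ℕ) (i : ℕ) : low G i ≤ maxlow G i := by
  exact le_maxlow G (low_le_self G i) (le_refl i)

lemma lowI_spec (G : SimpleGraph ℕ) {a b : ℕ} (h : a ≤ b) :
    ∃ m, a ≤ m ∧ m ≤ b ∧ low G m = lowI G a b := by
  have hne : (low G '' Set.Icc a b).Nonempty := ⟨low G a, a, Set.mem_Icc.2 ⟨le_refl _, h⟩, rfl⟩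
  obtain ⟨m, hm, hme⟩ := Nat.sInf_mem hne
  exact ⟨m, (Set.mem_Icc.1 hm).1, (Set.mem_Icc.1 hm).2, hme⟩

lemma lowI_le (G : SimpleGraph ℕ) {a b m : ℕ} (h1 : a ≤ m) (h2 : m ≤ b) :
    lowI G a b ≤ low G m :=
  Nat.sInf_le ⟨m, Set.mem_Icc.2 ⟨h1, h2⟩, rfl⟩

open Classical in
lemma adjset_eq (G : SimpleGraph ℕ) (D : Finset ℕ) (v : ℕ) :
    {u ∈ (D : Set ℕ) | G.Adj v u} = ↑(D.filter (fun u => G.Adj v u)) := by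
  ext u; simp [Finset.mem_filter]

lemma exists_adj_mem {G : SimpleGraph ℕ} {i : ℕ} {D : Finset ℕ} (hD : Dom12 G i D)
    {v : ℕ} (hv : v ∈ Finset.Icc 1 i) (hvD : v ∉ D) : ∃ u ∈ D, G.Adj v u := by
  have h := (hD.2 v hv hvD).1
  obtain ⟨u, hu⟩ := Set.nonempty_of_ncard_ne_zero (Nat.one_le_iff_ne_zero.mp h)
  exact ⟨u, hu.1, hu.2⟩

lemma dom12_restrict {G : SimpleGraph ℕ} {i j : ℕ} {D : Finset ℕ} (hD : Dom12 G i D)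
    (hji : j ≤ i) (hsub : D ⊆ Finset.Icc 1 j) : Dom12 G j D := by
  refine ⟨hsub, fun v hv hvD => ?_⟩
  simp only [Finset.mem_Icc] at hv
  exact hD.2 v (Finset.mem_Icc.2 ⟨hv.1, le_trans hv.2 hji⟩) hvD

lemma gval_le {G : SimpleGraph ℕ} {i : ℕ} {P : Finset ℕ → Prop} {D : Finset ℕ}
    (h1 : Dom12 G i D) (h2 : P D) : gval G i P ≤ (D.card : ℕ∞) :=
  sInf_le ⟨D, h1, h2, rfl⟩

lemma le_gval {G : SimpleGraph ℕ} {i : ℕ} {P : Finset ℕ → Prop} {c : ℕ∞}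
    (h : ∀ D : Finset ℕ, Dom12 G i D → P D → c ≤ (D.card : ℕ∞)) : c ≤ gval G i P := by
  refine le_sInf ?_
  rintro x ⟨D, h1, h2, rfl⟩
  exact h D h1 h2

lemma extend_dom {G : SimpleGraph ℕ} {n : ℕ} (hG : GoodNumbering G n)
    {i i' j k : ℕ} (h2 : i' ≤ i) (hmj : maxlow G i ≤ j) (hji' : j < i')
    {D : Finset ℕ} (hD : Dom12 G j D) (hjD : j ∈ D)
    (hfree : ∀ x ∈ Finset.Ico (lowI G (j + 1) i) j, x ≠ k → x ∉ D) :
    Dom12 G i D ∧ ∀ x ∈ Finset.Icc i' i, x ∉ D := by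
  classical
  have hji : j < i := lt_of_lt_of_le hji' h2
  have hsub : D ⊆ Finset.Icc 1 i := by
    intro x hx
    have := Finset.mem_Icc.1 (hD.1 hx)
    exact Finset.mem_Icc.2 ⟨this.1, by omega⟩
  have havoid : ∀ x ∈ Finset.Icc i' i, x ∉ D := by
    intro x hx hxD
    have h1 := Finset.mem_Icc.1 (hD.1 hxD)
    have h2' := Finset.mem_Icc.1 hx
    omega
  refine ⟨⟨hsub, fun v hv hvD => ?_⟩, havoid⟩
  have hv' := Finset.mem_Icc.1 hv
  by_cases hvj : v ≤ j
  · exact hD.2 v (Finset.mem_Icc.2 ⟨hv'.1, hvj⟩) hvD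
  · push_neg at hvj
    -- j < v ≤ i
    have hlowv : low G v ≤ j := by
      have h4 : low G i ≤ v := by
        have := low_le_maxlow G i; omega
      exact le_trans (le_maxlow G h4 hv'.2) hmj
    have hadjvj : G.Adj v j := adj_of_low_le hG hlowv hvj
    have hset : {u ∈ (D : Set ℕ) | G.Adj v u} = ↑(D.filter (fun u => G.Adj v u)) :=
      adjset_eq G D v
    rw [hset, Set.ncard_coe_finset]
    constructor
    · have : j ∈ D.filter (fun u => G.Adj v u) := Finset.mem_filter.2 ⟨hjD, hadjvj⟩
      exact Finset.card_pos.2 ⟨j, this⟩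
    · have hsub2 : D.filter (fun u => G.Adj v u) ⊆ {j, k} := by
        intro u hu
        rcases Finset.mem_filter.1 hu with ⟨huD, hadj⟩
        have huj : u ≤ j := (Finset.mem_Icc.1 (hD.1 huD)).2
        have hul : lowI G (j + 1) i ≤ u := by
          have hlv : lowI G (j + 1) i ≤ low G v := lowI_le G (by omega) hv'.2
          exact le_trans hlv (low_le_of_adj G hadj)
        by_cases huk : u = k
        · simp [huk]
        · by_cases hujj : u = j
          · simp [hujj]
          · exact absurd huD (hfree u (Finset.mem_Ico.2 ⟨hul, by omega⟩) huk)
      calc (D.filter (fun u => G.Adj v u)).card ≤ ({j, k} : Finset ℕ).card :=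
            Finset.card_le_card hsub2
        _ ≤ 2 := by
            have := Finset.card_insert_le j ({k} : Finset ℕ)
            simpa using this

/-- Lemma 3 (ii): recurrence for `γ⁰_{[1,2]}(i',i)`. -/
theorem g0I_recurrence (G : SimpleGraph ℕ) (n : ℕ) (hn : 1 ≤ n)
    (hG : GoodNumbering G n) (i i' : ℕ) (h1 : 1 ≤ i') (h2 : i' ≤ i) (h3 : i ≤ n) :
    (maxlow G i < i' →
      g0I G i' i =
        sInf {v : ℕ∞ | ∃ j ∈ Finset.Ico (maxlow G i) i',
          v = g1I G (lowI G (j + 1) i) j ∨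
          ∃ k ∈ Finset.Ico (lowI G (j + 1) i) j, v = g1Ij G (lowI G (j + 1) i) j k}) ∧
    (i' ≤ maxlow G i → g0I G i' i = ⊤) := by
  classical
  constructor
  · intro hml
    apply le_antisymm
    · -- g0I ≤ sInf RHS
      refine le_sInf ?_
      rintro v ⟨j, hj, hv⟩
      rw [Finset.mem_Ico] at hj
      rcases hv with hv | ⟨k, hk, hv⟩
      · subst hv
        refine le_gval ?_
        rintro D hD ⟨hjD, hfree⟩
        have hext := extend_dom hG h2 hj.1 hj.2 hD hjD
          (k := j) (fun x hx _ => hfree x hx)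
        exact gval_le hext.1 hext.2
      · subst hv
        refine le_gval ?_
        rintro D hD ⟨hjD, hkD, hfree⟩
        have hext := extend_dom hG h2 hj.1 hj.2 hD hjD (k := k) hfree
        exact gval_le hext.1 hext.2
    · -- sInf RHS ≤ g0I
      refine le_gval ?_
      rintro D hD hP
      -- D is nonempty
      have hiD : i ∉ D := hP i (Finset.mem_Icc.2 ⟨by omega, le_refl i⟩)
      obtain ⟨u0, hu0D, _⟩ := exists_adj_mem hD (Finset.mem_Icc.2 ⟨by omega, le_refl i⟩) hiD
      have hDne : D.Nonempty := ⟨u0, hu0D⟩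
      set j := D.max' hDne with hjdef
      have hjD : j ∈ D := D.max'_mem hDne
      have hmax : ∀ x ∈ D, x ≤ j := fun x hx => D.le_max' x hx
      have hjIcc := Finset.mem_Icc.1 (hD.1 hjD)
      have hj_lt : j < i' := by
        by_contra hc
        exact hP j (Finset.mem_Icc.2 ⟨by omega, hjIcc.2⟩) hjD
      have hj_ge : maxlow G i ≤ j := by
        obtain ⟨k0, hk01, hk02, hk03⟩ := maxlow_spec G i
        by_cases hc : k0 ≤ j
        · have : low G k0 ≤ k0 := low_le_self G k0
          omega
        · push_neg at hc
          have hk0D : k0 ∉ D := fun h => absurd (hmax k0 h) (by omega)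
          have hk0pos : 1 ≤ k0 := le_trans (low_pos hG (by omega)) hk01
          obtain ⟨u, huD, hadj⟩ := exists_adj_mem hD (Finset.mem_Icc.2 ⟨hk0pos, hk02⟩) hk0D
          have : low G k0 ≤ u := low_le_of_adj G hadj
          have := hmax u huD
          omega
      set ℓ := lowI G (j + 1) i with hℓdef
      obtain ⟨m, hm1, hm2, hm3⟩ := lowI_spec G (show j + 1 ≤ i by omega)
      have hmD : m ∉ D := fun h => absurd (hmax m h) (by omega)
      have hmIcc : m ∈ Finset.Icc 1 i := Finset.mem_Icc.2 ⟨by omega, hm2⟩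
      -- ℓ ≤ j
      obtain ⟨um, humD, hadjm⟩ := exists_adj_mem hD hmIcc hmD
      have hℓj : ℓ ≤ j := by
        have h5 : low G m ≤ um := low_le_of_adj G hadjm
        have := hmax um humD
        omega
      -- at most 2 D-neighbors for m
      have hc2 := (hD.2 m hmIcc hmD).2
      rw [adjset_eq G D m, Set.ncard_coe_finset] at hc2
      have hsubset : D ∩ Finset.Icc ℓ j ⊆ D.filter (fun u => G.Adj m u) := by
        intro u hu
        rcases Finset.mem_inter.1 hu with ⟨huD, huI⟩
        rw [Finset.mem_Icc] at huI
        refine Finset.mem_filter.2 ⟨huD, adj_of_low_le hG (by omega) (by omega)⟩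
      set T := D ∩ Finset.Ico ℓ j with hTdef
      have hTcard : T.card ≤ 1 := by
        have hjnT : j ∉ T := by
          intro h
          have := Finset.mem_Ico.1 (Finset.mem_inter.1 h).2
          omega
        have hins : insert j T ⊆ D ∩ Finset.Icc ℓ j := by
          intro x hx
          rcases Finset.mem_insert.1 hx with rfl | hx
          · exact Finset.mem_inter.2 ⟨hjD, Finset.mem_Icc.2 ⟨hℓj, le_refl _⟩⟩
          · rcases Finset.mem_inter.1 hx with ⟨hxD, hxI⟩
            rw [Finset.mem_Ico] at hxI
            exact Finset.mem_inter.2 ⟨hxD, Finset.mem_Icc.2 ⟨hxI.1, by omega⟩⟩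
        have h6 : (insert j T).card ≤ 2 :=
          le_trans (Finset.card_le_card hins) (le_trans (Finset.card_le_card hsubset) hc2)
        rw [Finset.card_insert_of_notMem hjnT] at h6
        omega
      have hDomj : Dom12 G j D := by
        refine dom12_restrict hD hjIcc.2 ?_
        intro x hx
        have := Finset.mem_Icc.1 (hD.1 hx)
        exact Finset.mem_Icc.2 ⟨this.1, hmax x hx⟩
      rcases Nat.le_one_iff_eq_zero_or_eq_one.1 hTcard with hT0 | hT1
      · -- case A: no other D-vertex in [ℓ, j)
        have hTe : T = ∅ := Finset.card_eq_zero.1 hT0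
        have hfree : ∀ x ∈ Finset.Ico ℓ j, x ∉ D := by
          intro x hx hxD
          have : x ∈ T := Finset.mem_inter.2 ⟨hxD, hx⟩
          rw [hTe] at this
          exact absurd this (Finset.notMem_empty x)
        calc sInf {v : ℕ∞ | ∃ j ∈ Finset.Ico (maxlow G i) i',
              v = g1I G (lowI G (j + 1) i) j ∨
              ∃ k ∈ Finset.Ico (lowI G (j + 1) i) j, v = g1Ij G (lowI G (j + 1) i) j k}
            ≤ g1I G ℓ j := sInf_le ⟨j, Finset.mem_Ico.2 ⟨hj_ge, hj_lt⟩, Or.inl rfl⟩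
          _ ≤ (D.card : ℕ∞) := gval_le hDomj ⟨hjD, hfree⟩
      · -- case B: exactly one other D-vertex k in [ℓ, j)
        obtain ⟨k, hTk⟩ := Finset.card_eq_one.1 hT1
        have hkT : k ∈ T := by rw [hTk]; exact Finset.mem_singleton_self k
        rcases Finset.mem_inter.1 hkT with ⟨hkD, hkI⟩
        have hfree : ∀ x ∈ Finset.Ico ℓ j, x ≠ k → x ∉ D := by
          intro x hx hxk hxD
          have : x ∈ T := Finset.mem_inter.2 ⟨hxD, hx⟩
          rw [hTk, Finset.mem_singleton] at this
          exact hxk this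
        calc sInf {v : ℕ∞ | ∃ j ∈ Finset.Ico (maxlow G i) i',
              v = g1I G (lowI G (j + 1) i) j ∨
              ∃ k ∈ Finset.Ico (lowI G (j + 1) i) j, v = g1Ij G (lowI G (j + 1) i) j k}
            ≤ g1Ij G ℓ j k :=
              sInf_le ⟨j, Finset.mem_Ico.2 ⟨hj_ge, hj_lt⟩, Or.inr ⟨k, hkI, rfl⟩⟩
          _ ≤ (D.card : ℕ∞) := gval_le hDomj ⟨hjD, hkD, hfree⟩
  · -- not defined case
    intro hml
    have hempty : {k : ℕ∞ | ∃ D : Finset ℕ, Dom12 G i D ∧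
        (∀ x ∈ Finset.Icc i' i, x ∉ D) ∧ (D.card : ℕ∞) = k} = ∅ := by
      rw [Set.eq_empty_iff_forall_notMem]
      rintro x ⟨D, hD, hP, rfl⟩
      obtain ⟨k0, hk01, hk02, hk03⟩ := maxlow_spec G i
      have hk0pos : 1 ≤ k0 := le_trans (low_pos hG (by omega)) hk01
      have hlk0 : low G k0 ≤ k0 := low_le_self G k0
      have hk0D : k0 ∉ D := hP k0 (Finset.mem_Icc.2 ⟨by omega, hk02⟩)
      obtain ⟨u, huD, hadj⟩ := exists_adj_mem hD (Finset.mem_Icc.2 ⟨hk0pos, hk02⟩) hk0D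
      have hu1 := Finset.mem_Icc.1 (hD.1 huD)
      have hlu : low G k0 ≤ u := low_le_of_adj G hadj
      exact hP u (Finset.mem_Icc.2 ⟨by omega, hu1.2⟩) huD
    show gval G i _ = ⊤
    rw [gval, hempty, sInf_empty]
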